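/- Let -1 < β < 0 and set η₀ = (1/2)((1+β)/(1-β))^{1/3} (1,1) and A(z) = z₁⁴ + 2β z₁²z₂² + z₂⁴. Then for all ξ ∈ ℝ²: Re A(ξ + iη₀) + ((1+β)/(1-β))^{1/3} = -β(ξ₁² - ξ₂²)² + (β+1)[(ξ₁² - c)² + (ξ₂² - c)²] - β((1+β)/(1-β))^{2/3}(ξ₁+ξ₂)² ≥ 0, where c = (3-β)/(4(1+β)^{1/3}(1-β)^{2/3}), with equality exactly at ξ = ±ξ₀ where ξ₀ = (1/2)(3-β)^{1/2}(1+β)^{-1/6}(1-β)^{-1/3}(1,-1). -/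

import Mathlib

open Complex

lemma stmt12_key (β T c x y u : ℝ) (hu : u = 1 / 2 * T)
    (hT3 : T ^ 3 * (1 - β) = 1 + β) (hcT : 4 * c * (1 + β) = (3 - β) * T ^ 2)
    (h1 : (1 : ℝ) + β ≠ 0) :
    x ^ 4 - 6 * x ^ 2 * u ^ 2 + u ^ 4
      + 2 * β * (x ^ 2 * y ^ 2 - x ^ 2 * u ^ 2 - y ^ 2 * u ^ 2 - 4 * x * y * u ^ 2 + u ^ 4)
      + y ^ 4 - 6 * y ^ 2 * u ^ 2 + u ^ 4 + T
    = -β * (x ^ 2 - y ^ 2) ^ 2 + (β + 1) * ((x ^ 2 - c) ^ 2 + (y ^ 2 - c) ^ 2)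
      - β * T ^ 2 * (x + y) ^ 2 := by
  subst hu
  have hmain : (1 + β) * (x ^ 4 - 6 * x ^ 2 * (1 / 2 * T) ^ 2 + (1 / 2 * T) ^ 4
      + 2 * β * (x ^ 2 * y ^ 2 - x ^ 2 * (1 / 2 * T) ^ 2 - y ^ 2 * (1 / 2 * T) ^ 2
        - 4 * x * y * (1 / 2 * T) ^ 2 + (1 / 2 * T) ^ 4)
      + y ^ 4 - 6 * y ^ 2 * (1 / 2 * T) ^ 2 + (1 / 2 * T) ^ 4 + T)
      = (1 + β) * (-β * (x ^ 2 - y ^ 2) ^ 2 + (β + 1) * ((x ^ 2 - c) ^ 2 + (y ^ 2 - c) ^ 2)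
        - β * T ^ 2 * (x + y) ^ 2) := by
    linear_combination ((1 + β) * (x ^ 2 + y ^ 2) / 2
        - (4 * c * (1 + β) + (3 - β) * T ^ 2) / 8) * hcT + (-T) * hT3
  exact mul_left_cancel₀ h1 hmain

set_option maxHeartbeats 1000000 in
/-- for `-1 < β < 0`, `η₀ = (1/2)((1+β)/(1-β))^{1/3}(1,1)`, the
identity `Re A(ξ+iη₀) + ((1+β)/(1-β))^{1/3} = -β(ξ₁²-ξ₂²)² + (β+1)[(ξ₁²-c)²+(ξ₂²-c)²]
 - β((1+β)/(1-β))^{2/3}(ξ₁+ξ₂)² ≥ 0`, where `c = (3-β)/(4(1+β)^{1/3}(1-β)^{2/3})`,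
with equality exactly at `ξ = ±ξ₀`,
`ξ₀ = (1/2)(3-β)^{1/2}(1+β)^{-1/6}(1-β)^{-1/3}(1,-1)`. -/
theorem stmt12 (β : ℝ) (hβ1 : -1 < β) (hβ2 : β < 0)
    (η0 c ξ01 : ℝ)
    (hη0 : η0 = 1 / 2 * ((1 + β) / (1 - β)) ^ ((1 : ℝ) / 3))
    (hc : c = (3 - β) / (4 * (1 + β) ^ ((1 : ℝ) / 3) * (1 - β) ^ ((2 : ℝ) / 3)))
    (hξ0 : ξ01 = 1 / 2 * (3 - β) ^ ((1 : ℝ) / 2) * (1 + β) ^ (-(1 : ℝ) / 6)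
        * (1 - β) ^ (-(1 : ℝ) / 3))
    (ξ1 ξ2 : ℝ) :
    (((ξ1 : ℂ) + (η0 : ℂ) * I) ^ 4
        + 2 * β * ((ξ1 : ℂ) + (η0 : ℂ) * I) ^ 2 * ((ξ2 : ℂ) + (η0 : ℂ) * I) ^ 2
        + ((ξ2 : ℂ) + (η0 : ℂ) * I) ^ 4).re + ((1 + β) / (1 - β)) ^ ((1 : ℝ) / 3)
      = -β * (ξ1 ^ 2 - ξ2 ^ 2) ^ 2
        + (β + 1) * ((ξ1 ^ 2 - c) ^ 2 + (ξ2 ^ 2 - c) ^ 2)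
        - β * ((1 + β) / (1 - β)) ^ ((2 : ℝ) / 3) * (ξ1 + ξ2) ^ 2
    ∧ 0 ≤ -β * (ξ1 ^ 2 - ξ2 ^ 2) ^ 2
        + (β + 1) * ((ξ1 ^ 2 - c) ^ 2 + (ξ2 ^ 2 - c) ^ 2)
        - β * ((1 + β) / (1 - β)) ^ ((2 : ℝ) / 3) * (ξ1 + ξ2) ^ 2
    ∧ (-β * (ξ1 ^ 2 - ξ2 ^ 2) ^ 2
        + (β + 1) * ((ξ1 ^ 2 - c) ^ 2 + (ξ2 ^ 2 - c) ^ 2)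
        - β * ((1 + β) / (1 - β)) ^ ((2 : ℝ) / 3) * (ξ1 + ξ2) ^ 2 = 0
      ↔ (ξ1 = ξ01 ∧ ξ2 = -ξ01) ∨ (ξ1 = -ξ01 ∧ ξ2 = ξ01)) := by
  have h1β : (0:ℝ) < 1 + β := by linarith
  have h2β : (0:ℝ) < 1 - β := by linarith
  set a := (1 + β) ^ ((1:ℝ)/3) with ha_def
  set b := (1 - β) ^ ((1:ℝ)/3) with hb_def
  have ha : 0 < a := Real.rpow_pos_of_pos h1β _
  have hb : 0 < b := Real.rpow_pos_of_pos h2β _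
  have ha3 : a ^ 3 = 1 + β := by
    rw [ha_def, ← Real.rpow_natCast ((1 + β) ^ ((1:ℝ)/3)) 3, ← Real.rpow_mul h1β.le]
    norm_num
  have hb3 : b ^ 3 = 1 - β := by
    rw [hb_def, ← Real.rpow_natCast ((1 - β) ^ ((1:ℝ)/3)) 3, ← Real.rpow_mul h2β.le]
    norm_num
  have hT : ((1 + β) / (1 - β)) ^ ((1:ℝ)/3) = a / b :=
    Real.div_rpow h1β.le h2β.le _
  have hT2 : ((1 + β) / (1 - β)) ^ ((2:ℝ)/3) = (a / b) ^ 2 := by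
    rw [show ((2:ℝ)/3) = (1:ℝ)/3 * (2:ℕ) by norm_num,
      Real.rpow_mul (by positivity), Real.rpow_natCast, hT]
  have hb2 : (1 - β) ^ ((2:ℝ)/3) = b ^ 2 := by
    rw [show ((2:ℝ)/3) = (1:ℝ)/3 * (2:ℕ) by norm_num,
      Real.rpow_mul h2β.le, Real.rpow_natCast, hb_def]
  have hc' : c = (3 - β) / (4 * a * b ^ 2) := by rw [hc, hb2]
  have hT3 : (a / b) ^ 3 * (1 - β) = 1 + β := by
    rw [div_pow, ha3, hb3]
    field_simp
  have hcT : 4 * c * (1 + β) = (3 - β) * (a / b) ^ 2 := by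
    rw [hc', ← ha3]
    field_simp
  have hξc : ξ01 ^ 2 = c := by
    have hg : ((3 - β) ^ ((1:ℝ)/2)) ^ 2 = 3 - β := by
      rw [← Real.rpow_natCast ((3 - β) ^ ((1:ℝ)/2)) 2, ← Real.rpow_mul (by linarith)]
      norm_num
    have hp : ((1 + β) ^ (-(1:ℝ)/6)) ^ 2 = a⁻¹ := by
      rw [← Real.rpow_natCast ((1 + β) ^ (-(1:ℝ)/6)) 2, ← Real.rpow_mul h1β.le,
        show (-(1:ℝ)/6 * ((2:ℕ):ℝ)) = -((1:ℝ)/3) by push_cast; ring,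
        Real.rpow_neg h1β.le, ha_def]
    have hq : ((1 - β) ^ (-(1:ℝ)/3)) ^ 2 = (b ^ 2)⁻¹ := by
      rw [← Real.rpow_natCast ((1 - β) ^ (-(1:ℝ)/3)) 2, ← Real.rpow_mul h2β.le,
        show (-(1:ℝ)/3 * ((2:ℕ):ℝ)) = -((2:ℝ)/3) by push_cast; ring,
        Real.rpow_neg h2β.le, hb2]
    rw [hξ0, mul_pow, mul_pow, mul_pow, hg, hp, hq, hc']
    field_simp
    norm_num
    ring
  have hξnn : 0 ≤ ξ01 := by
    rw [hξ0]
    have h1 := Real.rpow_nonneg (show (0:ℝ) ≤ 3 - β by linarith) ((1:ℝ)/2)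
    have h2 := Real.rpow_nonneg h1β.le (-(1:ℝ)/6)
    have h3 := Real.rpow_nonneg h2β.le (-(1:ℝ)/3)
    have : (0:ℝ) ≤ 1/2 := by norm_num
    exact mul_nonneg (mul_nonneg (mul_nonneg this h1) h2) h3
  have hη0' : η0 = 1 / 2 * (a / b) := by rw [hη0, hT]
  clear_value a b
  rw [hT, hT2]
  have hre : (((ξ1 : ℂ) + (η0 : ℂ) * I) ^ 4
        + 2 * β * ((ξ1 : ℂ) + (η0 : ℂ) * I) ^ 2 * ((ξ2 : ℂ) + (η0 : ℂ) * I) ^ 2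
        + ((ξ2 : ℂ) + (η0 : ℂ) * I) ^ 4).re
      = ξ1 ^ 4 - 6 * ξ1 ^ 2 * η0 ^ 2 + η0 ^ 4
        + 2 * β * (ξ1 ^ 2 * ξ2 ^ 2 - ξ1 ^ 2 * η0 ^ 2 - ξ2 ^ 2 * η0 ^ 2
          - 4 * ξ1 * ξ2 * η0 ^ 2 + η0 ^ 4)
        + ξ2 ^ 4 - 6 * ξ2 ^ 2 * η0 ^ 2 + η0 ^ 4 := by
    simp only [pow_succ, pow_zero, one_mul, Complex.add_re, Complex.add_im,
      Complex.mul_re, Complex.mul_im, Complex.ofReal_re, Complex.ofReal_im,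
      Complex.I_re, Complex.I_im, Complex.re_ofNat, Complex.im_ofNat]
    ring
  have hkey := stmt12_key β (a / b) c ξ1 ξ2 η0 hη0' hT3 hcT h1β.ne'
  refine ⟨by rw [hre]; linear_combination hkey, ?_, ?_⟩
  · have h1 : 0 ≤ -β * (ξ1 ^ 2 - ξ2 ^ 2) ^ 2 :=
      mul_nonneg (by linarith) (sq_nonneg _)
    have h2 : 0 ≤ (β + 1) * ((ξ1 ^ 2 - c) ^ 2 + (ξ2 ^ 2 - c) ^ 2) :=
      mul_nonneg (by linarith) (by positivity)
    have h3 : 0 ≤ -β * ((a / b) ^ 2 * (ξ1 + ξ2) ^ 2) :=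
      mul_nonneg (by linarith) (by positivity)
    linarith [h1, h2, h3]
  · constructor
    · intro hE
      have h1 : 0 ≤ -β * (ξ1 ^ 2 - ξ2 ^ 2) ^ 2 :=
        mul_nonneg (by linarith) (sq_nonneg _)
      have h2 : 0 ≤ (β + 1) * ((ξ1 ^ 2 - c) ^ 2 + (ξ2 ^ 2 - c) ^ 2) :=
        mul_nonneg (by linarith) (by positivity)
      have h3 : 0 ≤ -β * ((a / b) ^ 2 * (ξ1 + ξ2) ^ 2) :=
        mul_nonneg (by linarith) (by positivity)
      have e2 : (β + 1) * ((ξ1 ^ 2 - c) ^ 2 + (ξ2 ^ 2 - c) ^ 2) = 0 := by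
        linarith [h1, h2, h3, hE]
      have e3 : -β * ((a / b) ^ 2 * (ξ1 + ξ2) ^ 2) = 0 := by
        linarith [h1, h2, h3, hE]
      have hβne : (-β : ℝ) ≠ 0 := by linarith
      have hsq2 : (a / b) ^ 2 * (ξ1 + ξ2) ^ 2 = 0 := (mul_eq_zero.1 e3).resolve_left hβne
      have hab : ((a / b) ^ 2 : ℝ) ≠ 0 := by positivity
      have hss : (ξ1 + ξ2) ^ 2 = 0 := (mul_eq_zero.1 hsq2).resolve_left hab
      have hsum : ξ1 + ξ2 = 0 := by
        exact pow_eq_zero_iff (two_ne_zero) |>.1 hss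
      have hβ1ne : (β + 1 : ℝ) ≠ 0 := by linarith
      have hsq : (ξ1 ^ 2 - c) ^ 2 + (ξ2 ^ 2 - c) ^ 2 = 0 :=
        (mul_eq_zero.1 e2).resolve_left hβ1ne
      have hx1 : ξ1 ^ 2 = c := by
        have s1 : (ξ1 ^ 2 - c) ^ 2 = 0 := by
          linarith [sq_nonneg (ξ1 ^ 2 - c), sq_nonneg (ξ2 ^ 2 - c)]
        have := pow_eq_zero_iff (two_ne_zero) |>.1 s1
        linarith
      have hfac : (ξ1 - ξ01) * (ξ1 + ξ01) = 0 := by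
        have hxx : ξ1 ^ 2 = ξ01 ^ 2 := by rw [hξc, hx1]
        linear_combination hxx
      rcases mul_eq_zero.1 hfac with h | h
      · exact Or.inl ⟨by linarith, by linarith⟩
      · exact Or.inr ⟨by linarith, by linarith⟩
    · rintro (⟨h1, h2⟩ | ⟨h1, h2⟩) <;> subst h1 <;> subst h2 <;>
        rw [← hξc] <;> ring
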